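/- On the open set of symmetric positive definite N×N matrices, the matrix square root map A ↦ √A is continuously differentiable, and its derivative at A in a symmetric direction B is the unique symmetric matrix D satisfying the Sylvester equation D√A + √A D = B. -/

import Mathlib

open scoped BigOperators

attribute [local instance] Matrix.frobeniusNormedAddCommGroup Matrix.frobeniusNormedSpace

noncomputable section

/-- The set of symmetric positive definite real `N×N` matrices. -/
def SPD (N : ℕ) : Set (Matrix (Fin N) (Fin N) ℝ) :=
  {A | A.PosDef ∧ A.IsSymm}

namespace MatrixSqrtAux

open Matrix

attribute [local instance] Matrix.frobeniusNormedRing Matrix.frobeniusNormedAlgebra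

variable {N : ℕ}

local notation "Mat" => Matrix (Fin N) (Fin N) ℝ

open scoped MatrixOrder in
/-- compatibility: the square root of a positive semidefinite matrix -/
def _root_.Matrix.PosSemidef.sqrt {A : Mat} (_h : A.PosSemidef) : Mat := CFC.sqrt A

open scoped MatrixOrder in
lemma _root_.Matrix.PosSemidef.sqrt_mul_self {A : Mat} (h : A.PosSemidef) :
    h.sqrt * h.sqrt = A :=
  CFC.sqrt_mul_sqrt_self A h.nonneg

open scoped MatrixOrder in
lemma _root_.Matrix.PosSemidef.posSemidef_sqrt {A : Mat} (h : A.PosSemidef) :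
    h.sqrt.PosSemidef :=
  (CFC.sqrt_nonneg A).posSemidef

open scoped MatrixOrder in
lemma _root_.Matrix.PosSemidef.eq_sqrt_of_sq_eq {A B : Mat} (hA : A.PosSemidef)
    (hB : B.PosSemidef) (h : A ^ 2 = B) : A = hB.sqrt :=
  (CFC.sqrt_unique (by rw [← pow_two, h]) hA.nonneg).symm

/-- entrywise bound by the Frobenius norm -/
lemma entry_abs_le (B : Mat) (i j : Fin N) : |B i j| ≤ ‖B‖ := by
  rw [Matrix.frobenius_norm_def]
  have h1 : (|B i j| ^ (2:ℝ)) ^ (1/2 : ℝ) = |B i j| := by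
    rw [← Real.rpow_mul (abs_nonneg _)]
    norm_num
  rw [← h1]
  apply Real.rpow_le_rpow (by positivity) _ (by norm_num)
  calc |B i j| ^ (2:ℝ) = ‖B i j‖ ^ (2:ℝ) := by rw [Real.norm_eq_abs]
    _ ≤ ∑ j', ‖B i j'‖ ^ (2:ℝ) := by
        apply Finset.single_le_sum (f := fun j' => ‖B i j'‖ ^ (2:ℝ)) (fun _ _ => by positivity)
          (Finset.mem_univ j)
    _ ≤ ∑ i', ∑ j', ‖B i' j'‖ ^ (2:ℝ) := by
        apply Finset.single_le_sum (f := fun i' => ∑ j', ‖B i' j'‖ ^ (2:ℝ))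
          (fun _ _ => by positivity) (Finset.mem_univ i)

/-- The Sylvester operator, bundled as a continuous linear map in `X`. -/
def LXc : Mat →L[ℝ] Mat →L[ℝ] Mat :=
  (ContinuousLinearMap.mul ℝ Mat).flip + ContinuousLinearMap.mul ℝ Mat

/-- The Sylvester operator `D ↦ D * X + X * D`. -/
def LX (X : Mat) : Mat →L[ℝ] Mat := LXc X

lemma LX_apply (X D : Mat) : LX X D = D * X + X * D := rfl

lemma trace_transpose_mul_self (M : Mat) :
    Matrix.trace (Mᵀ * M) = ∑ j, ∑ i, (M i j)^2 := by
  simp [Matrix.trace, Matrix.mul_apply, Matrix.diag, sq]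

lemma trace_transpose_mul_self_nonneg (M : Mat) : 0 ≤ Matrix.trace (Mᵀ * M) := by
  rw [trace_transpose_mul_self]; positivity

lemma eq_zero_of_trace_transpose_mul_self (M : Mat) (h : Matrix.trace (Mᵀ * M) = 0) :
    M = 0 := by
  rw [trace_transpose_mul_self] at h
  ext i j
  have h1 : ∀ j' ∈ Finset.univ, (0:ℝ) ≤ ∑ i', (M i' j')^2 := fun _ _ => by positivity
  have h2 := (Finset.sum_eq_zero_iff_of_nonneg h1).mp h j (Finset.mem_univ j)
  have h3 := (Finset.sum_eq_zero_iff_of_nonneg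
    (fun _ _ => by positivity : ∀ i' ∈ Finset.univ, (0:ℝ) ≤ (M i' j)^2)).mp h2 i (Finset.mem_univ i)
  simpa using pow_eq_zero_iff (n := 2) (by norm_num) |>.mp h3

/-- Injectivity of the Sylvester operator for `X` symmetric positive definite. -/
lemma LX_inj {X : Mat} (hX : X.PosDef) (D : Mat) (hD : D * X + X * D = 0) : D = 0 := by
  set C : Mat := hX.posSemidef.sqrt with hCdef
  have hCh : Cᴴ = C := hX.posSemidef.posSemidef_sqrt.isHermitian
  have hCs : Cᵀ = C := by simpa using hCh
  have hCC : C * C = X := hX.posSemidef.sqrt_mul_self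
  have hdet : IsUnit C.det := by
    have h2 : C.det * C.det = X.det := by rw [← Matrix.det_mul, hCC]
    have : (0:ℝ) < X.det := hX.det_pos
    rw [isUnit_iff_ne_zero]
    intro h0
    rw [h0, mul_zero] at h2
    linarith
  have h0 : Matrix.trace (Dᵀ * (D * X + X * D)) = 0 := by rw [hD, mul_zero, Matrix.trace_zero]
  have e1 : Matrix.trace (Dᵀ * (D * X)) = Matrix.trace ((D*C)ᵀ * (D*C)) := by
    have : (D*C)ᵀ * (D*C) = C * (Dᵀ * (D * C)) := by
      rw [Matrix.transpose_mul, hCs]; noncomm_ring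
    rw [this, Matrix.trace_mul_comm C]
    congr 1
    rw [← hCC]; noncomm_ring
  have e2 : Matrix.trace (Dᵀ * (X * D)) = Matrix.trace ((C*D)ᵀ * (C*D)) := by
    congr 1
    rw [Matrix.transpose_mul, hCs, ← hCC]; noncomm_ring
  have hsplit : Matrix.trace ((D*C)ᵀ * (D*C)) + Matrix.trace ((C*D)ᵀ * (C*D)) = 0 := by
    rw [← e1, ← e2, ← Matrix.trace_add, ← Matrix.mul_add, h0]
  have hz : Matrix.trace ((D*C)ᵀ * (D*C)) = 0 := by
    have := trace_transpose_mul_self_nonneg (D*C)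
    have := trace_transpose_mul_self_nonneg (C*D)
    linarith
  have hDC : D * C = 0 := eq_zero_of_trace_transpose_mul_self _ hz
  have hCu : IsUnit C := (Matrix.isUnit_iff_isUnit_det C).mpr hdet
  obtain ⟨u, hu⟩ := hCu
  calc D = D * C * (↑u⁻¹ : Mat) := by
        rw [mul_assoc, ← hu, Units.mul_inv, mul_one]
    _ = 0 := by rw [hDC, zero_mul]

/-- The set of matrices with positive definite quadratic form (no symmetry assumed). -/
def U (N : ℕ) : Set (Matrix (Fin N) (Fin N) ℝ) :=
  {Y | ∀ x : Fin N → ℝ, x ≠ 0 → 0 < x ⬝ᵥ Y *ᵥ x}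

lemma posDef_mem_U {A : Mat} (hA : A.PosDef) : A ∈ U N := fun x hx => by
  simpa using hA.dotProduct_mulVec_pos hx

lemma posDef_of_mem_U {A : Mat} (hU : A ∈ U N) (hs : A.IsSymm) : A.PosDef := by
  refine Matrix.PosDef.of_dotProduct_mulVec_pos ?_ ?_
  · rw [Matrix.IsHermitian, Matrix.conjTranspose_eq_transpose_of_trivial]
    exact hs
  · intro x hx
    simpa using hU x hx

lemma quad_smul (Y : Mat) (t : ℝ) (u : Fin N → ℝ) :
    (t • u) ⬝ᵥ Y *ᵥ (t • u) = t^2 * (u ⬝ᵥ Y *ᵥ u) := by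
  rw [Matrix.mulVec_smul, smul_dotProduct, dotProduct_smul]
  simp [smul_eq_mul]; ring

lemma quad_abs_le (B : Mat) (x : Fin N → ℝ) (hx : ‖x‖ = 1) :
    |x ⬝ᵥ B *ᵥ x| ≤ (N:ℝ)^2 * ‖B‖ := by
  have hxi : ∀ i, |x i| ≤ 1 := fun i => by
    simpa [hx, Real.norm_eq_abs] using norm_le_pi_norm x i
  have hform : x ⬝ᵥ B *ᵥ x = ∑ i, ∑ j, x i * B i j * x j := by
    simp [dotProduct, Matrix.mulVec, Finset.mul_sum, mul_assoc]
  rw [hform]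
  have h1 : |∑ i, ∑ j, x i * B i j * x j| ≤ ∑ i, ∑ j, |x i * B i j * x j| := by
    apply (Finset.abs_sum_le_sum_abs _ _).trans
    gcongr with i _
    exact Finset.abs_sum_le_sum_abs _ _
  refine h1.trans ?_
  have h2 : ∀ i j : Fin N, |x i * B i j * x j| ≤ ‖B‖ := by
    intro i j
    rw [abs_mul, abs_mul]
    calc |x i| * |B i j| * |x j| ≤ 1 * ‖B‖ * 1 := by
          apply mul_le_mul _ (hxi j) (abs_nonneg _) (by positivity)
          exact mul_le_mul (hxi i) (entry_abs_le B i j) (abs_nonneg _) zero_le_one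
      _ = ‖B‖ := by ring
  calc ∑ i, ∑ j, |x i * B i j * x j| ≤ ∑ _i : Fin N, ∑ _j : Fin N, ‖B‖ := by
        gcongr with i _ j _
        exact h2 i j
    _ = (N:ℝ)^2 * ‖B‖ := by
        simp [Finset.sum_const, Finset.card_univ]
        ring

lemma isOpen_U : IsOpen (U N) := by
  rcases Nat.eq_zero_or_pos N with hN | hN
  · have : U N = Set.univ := by
      ext Y
      simp only [U, Set.mem_setOf_eq, Set.mem_univ, iff_true]
      intro x hx
      exact absurd (funext fun i => absurd (i.2.trans_eq hN) (Nat.not_lt_zero _)) hx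
    rw [this]; exact isOpen_univ
  · refine Metric.isOpen_iff.mpr ?_
    intro A hA
    have hfc : Continuous fun x : Fin N → ℝ => x ⬝ᵥ A *ᵥ x :=
      continuous_id.dotProduct (continuous_const.matrix_mulVec continuous_id)
    have hcomp : IsCompact (Metric.sphere (0 : Fin N → ℝ) 1) := isCompact_sphere 0 1
    have hne : (Metric.sphere (0 : Fin N → ℝ) 1).Nonempty := by
      haveI : Nonempty (Fin N) := ⟨⟨0, hN⟩⟩
      exact NormedSpace.sphere_nonempty.mpr zero_le_one
    obtain ⟨x₀, hx₀mem, hx₀min⟩ := hcomp.exists_isMinOn hne hfc.continuousOn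
    set c := x₀ ⬝ᵥ A *ᵥ x₀ with hc
    have hx₀norm : ‖x₀‖ = 1 := by simpa using hx₀mem
    have hx₀ne : x₀ ≠ 0 := by
      intro h
      rw [h] at hx₀norm
      simp at hx₀norm
    have hcpos : 0 < c := hA x₀ hx₀ne
    refine ⟨c / ((N:ℝ)^2 + 1), by positivity, ?_⟩
    intro Y hY
    have hYA : ‖Y - A‖ < c / ((N:ℝ)^2 + 1) := by
      rw [Metric.mem_ball, dist_eq_norm] at hY
      exact hY
    intro x hx
    -- reduce to unit vectors
    have key : ∀ u : Fin N → ℝ, ‖u‖ = 1 → 0 < u ⬝ᵥ Y *ᵥ u := by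
      intro u hu
      have h1 : c ≤ u ⬝ᵥ A *ᵥ u := hx₀min (by simpa using hu)
      have h2 : |u ⬝ᵥ (Y - A) *ᵥ u| ≤ (N:ℝ)^2 * ‖Y - A‖ := quad_abs_le _ _ hu
      have h3 : u ⬝ᵥ Y *ᵥ u = u ⬝ᵥ A *ᵥ u + u ⬝ᵥ (Y - A) *ᵥ u := by
        rw [Matrix.sub_mulVec, dotProduct_sub]
        ring
      have h4 : (N:ℝ)^2 * ‖Y - A‖ < c := by
        calc (N:ℝ)^2 * ‖Y - A‖ ≤ ((N:ℝ)^2 + 1) * ‖Y - A‖ := by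
              have := norm_nonneg (Y - A); nlinarith
          _ < ((N:ℝ)^2 + 1) * (c / ((N:ℝ)^2 + 1)) := by
              apply mul_lt_mul_of_pos_left hYA (by positivity)
          _ = c := by field_simp
      have h5 : -((N:ℝ)^2 * ‖Y - A‖) ≤ u ⬝ᵥ (Y - A) *ᵥ u := neg_le_of_abs_le h2
      linarith
    have hxn : (0:ℝ) < ‖x‖ := norm_pos_iff.mpr hx
    have hu : ‖(‖x‖⁻¹ • x)‖ = 1 := norm_smul_inv_norm hx
    have := key _ hu
    have hxeq : x = ‖x‖ • (‖x‖⁻¹ • x) := by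
      rw [smul_smul, mul_inv_cancel₀ (ne_of_gt hxn), one_smul]
    calc (0:ℝ) < ‖x‖^2 * ((‖x‖⁻¹ • x) ⬝ᵥ Y *ᵥ (‖x‖⁻¹ • x)) := by positivity
      _ = x ⬝ᵥ Y *ᵥ x := by rw [← quad_smul, ← hxeq]

lemma posDef_of_posSemidef_sq {A S : Mat} (hA : A.PosDef) (hSpsd : S.PosSemidef)
    (hSS : S * S = A) : S.PosDef := by
  refine Matrix.PosDef.of_dotProduct_mulVec_pos hSpsd.isHermitian ?_
  intro x hx
  have hSx : S *ᵥ x ≠ 0 := by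
    intro h
    have hAx : A *ᵥ x = 0 := by rw [← hSS, ← Matrix.mulVec_mulVec, h, Matrix.mulVec_zero]
    have := hA.dotProduct_mulVec_pos hx
    rw [hAx] at this
    simp at this
  obtain ⟨T, hTT, hTh⟩ : ∃ T : Mat, T * T = S ∧ Tᴴ = T :=
    ⟨hSpsd.sqrt, hSpsd.sqrt_mul_self, hSpsd.posSemidef_sqrt.isHermitian⟩
  have hTs : Tᵀ = T := by
    rw [← Matrix.conjTranspose_eq_transpose_of_trivial]; exact hTh
  obtain ⟨y, hy⟩ : ∃ y, y = T *ᵥ x := ⟨_, rfl⟩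
  have hvm : x ᵥ* T = T *ᵥ x := (Matrix.mulVec_transpose T x).symm.trans (by rw [hTs])
  have hform : star x ⬝ᵥ S *ᵥ x = y ⬝ᵥ y := by
    have h1 : star x = x := by
      funext i; simp
    rw [h1, ← hTT, ← Matrix.mulVec_mulVec, Matrix.dotProduct_mulVec, hvm, hy]
  rw [hform]
  have hyne : y ≠ 0 := by
    intro h
    apply hSx
    rw [← hTT, ← Matrix.mulVec_mulVec, ← hy, h, Matrix.mulVec_zero]
  have h0 : y ⬝ᵥ y ≠ 0 := by
    intro h
    apply hyne
    have : star y ⬝ᵥ y = 0 := by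
      have h1 : star y = y := by funext i; simp
      rw [h1, h]
    exact dotProduct_star_self_eq_zero.mp this
  have hnn : 0 ≤ y ⬝ᵥ y := by
    have : y ⬝ᵥ y = ∑ i, (y i)^2 := by simp [dotProduct, sq]
    rw [this]; positivity
  exact lt_of_le_of_ne hnn (Ne.symm h0)

/-- The global square root function. -/
def sq (A : Mat) : Mat :=
  @dite _ (A.PosSemidef) (Classical.propDecidable _) (fun h => h.sqrt) (fun _ => 0)

lemma sq_eq {A : Mat} (h : A.PosSemidef) : sq A = h.sqrt := by
  rw [sq, dif_pos h]

lemma sq_mul_self {A : Mat} (hA : A.PosDef) : sq A * sq A = A := by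
  rw [sq_eq hA.posSemidef]; exact hA.posSemidef.sqrt_mul_self

lemma sq_posSemidef {A : Mat} (hA : A.PosDef) : (sq A).PosSemidef := by
  rw [sq_eq hA.posSemidef]; exact hA.posSemidef.posSemidef_sqrt

lemma sq_posDef {A : Mat} (hA : A.PosDef) : (sq A).PosDef :=
  posDef_of_posSemidef_sq hA (sq_posSemidef hA) (sq_mul_self hA)

lemma sq_isSymm {A : Mat} (hA : A.PosDef) : (sq A).IsSymm := by
  have := (sq_posDef hA).isHermitian
  rwa [Matrix.IsHermitian, Matrix.conjTranspose_eq_transpose_of_trivial] at this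

lemma sq_unique {A G : Mat} (hA : A.PosSemidef) (hG : G.PosSemidef) (h : G * G = A) :
    G = sq A := by
  rw [sq_eq hA]
  exact hG.eq_sqrt_of_sq_eq hA (by rw [pow_two, h])

lemma LX_injective {X : Mat} (hX : X.PosDef) : Function.Injective (LX X) := by
  intro D E h
  have h0 : LX X (D - E) = 0 := by rw [map_sub, h, sub_self]
  have h1 : (D - E) * X + X * (D - E) = 0 := by rw [← LX_apply]; exact h0
  exact sub_eq_zero.mp (LX_inj hX _ h1)

lemma exists_sylvEquiv {X : Mat} (hX : X.PosDef) :
    ∃ e : Mat ≃L[ℝ] Mat, (e : Mat →L[ℝ] Mat) = LX X := by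
  have hinj : Function.Injective ((LX X) : Mat →ₗ[ℝ] Mat) := LX_injective hX
  have hsurj : Function.Surjective ((LX X) : Mat →ₗ[ℝ] Mat) :=
    (LinearMap.injective_iff_surjective).mp hinj
  refine ⟨LinearEquiv.toContinuousLinearEquiv
    (LinearEquiv.ofBijective ((LX X) : Mat →ₗ[ℝ] Mat) ⟨hinj, hsurj⟩), ?_⟩
  ext D
  rfl

lemma isUnit_LX {X : Mat} (hX : X.PosDef) : IsUnit (LX X) := by
  obtain ⟨e, he⟩ := exists_sylvEquiv hX
  refine ⟨⟨LX X, (e.symm : Mat →L[ℝ] Mat), ?_, ?_⟩, rfl⟩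
  · ext D
    rw [← he]
    simp [ContinuousLinearMap.mul_apply]
  · ext D
    rw [← he]
    simp [ContinuousLinearMap.mul_apply]

lemma ring_inverse_LX {X : Mat} (hX : X.PosDef) {e : Mat ≃L[ℝ] Mat}
    (he : (e : Mat →L[ℝ] Mat) = LX X) :
    Ring.inverse (LX X) = (e.symm : Mat →L[ℝ] Mat) := by
  have hu : IsUnit (LX X) := isUnit_LX hX
  obtain ⟨u, hu'⟩ := hu
  rw [← hu', Ring.inverse_unit]
  -- u⁻¹ equals e.symm since both are inverses of LX X
  have h1 : (u : Mat →L[ℝ] Mat) * (e.symm : Mat →L[ℝ] Mat) = 1 := by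
    rw [hu', ← he]
    ext D
    simp [ContinuousLinearMap.mul_apply]
  calc (↑u⁻¹ : Mat →L[ℝ] Mat) = ↑u⁻¹ * (↑u * ↑e.symm) := by rw [h1, mul_one]
    _ = (↑u⁻¹ * ↑u) * ↑e.symm := by rw [mul_assoc]
    _ = ↑e.symm := by rw [Units.inv_mul, one_mul]

lemma hasStrict_mulself (X : Mat) :
    HasStrictFDerivAt (fun Y : Mat => Y * Y) (LX X) X := by
  have h := (hasStrictFDerivAt_id (𝕜 := ℝ) X).mul' (hasStrictFDerivAt_id X)
  refine h.congr_fderiv ?_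
  ext D
  simp only [LX_apply, ContinuousLinearMap.add_apply, ContinuousLinearMap.smul_apply,
    ContinuousLinearMap.smulRight_apply, ContinuousLinearMap.coe_id', id_eq, smul_eq_mul]
  exact add_comm _ _

lemma SPD_subset_symm : SPD N ⊆ {S : Mat | S.IsSymm} := fun _ h => h.2

lemma key_ev {A : Mat} (hA : A.PosDef) (g : Mat → Mat) (hgc : ContinuousAt g A)
    (hgA : g A = sq A)
    (hleft : ∀ᶠ X in nhds (sq A), g (X * X) = X)
    (hright : ∀ᶠ Y in nhds A, g Y * g Y = Y) :
    ∀ᶠ Y in nhdsWithin A {S : Mat | S.IsSymm}, sq Y = g Y := by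
  have hXpd : (sq A).PosDef := sq_posDef hA
  have hXU : sq A ∈ U N := posDef_mem_U hXpd
  have hXs : (sq A)ᵀ = sq A := sq_isSymm hA
  have hV : {X : Mat | g (X * X) = X} ∩ U N ∈ nhds (sq A) :=
    Filter.inter_mem hleft (isOpen_U.mem_nhds hXU)
  have htr : Continuous fun X : Mat => Xᵀ := continuous_id.matrix_transpose
  have hVt : (fun X : Mat => Xᵀ) ⁻¹' ({X : Mat | g (X * X) = X} ∩ U N) ∈ nhds (sq A) := by
    apply htr.continuousAt.preimage_mem_nhds
    rw [hXs]
    exact hV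
  have hW : ({X : Mat | g (X * X) = X} ∩ U N) ∩
      ((fun X : Mat => Xᵀ) ⁻¹' ({X : Mat | g (X * X) = X} ∩ U N)) ∈ nhds (sq A) :=
    Filter.inter_mem hV hVt
  have hgmem : ∀ᶠ Y in nhds A, g Y ∈ ({X : Mat | g (X * X) = X} ∩ U N) ∩
      ((fun X : Mat => Xᵀ) ⁻¹' ({X : Mat | g (X * X) = X} ∩ U N)) := by
    apply hgc
    rw [hgA]
    exact hW
  have hAU : ∀ᶠ Y in nhds A, Y ∈ U N := isOpen_U.mem_nhds (posDef_mem_U hA)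
  filter_upwards [(hright.and (hgmem.and hAU)).filter_mono nhdsWithin_le_nhds,
    eventually_mem_nhdsWithin] with Y hY hYsymm
  obtain ⟨hY2, hgYmem, hYU⟩ := hY
  obtain ⟨⟨-, hgYU⟩, hgYt, -⟩ := hgYmem
  have hgYsymm : (g Y)ᵀ = g Y := by
    have h1 : (g Y)ᵀ * (g Y)ᵀ = Y := by
      rw [← Matrix.transpose_mul, hY2]
      exact hYsymm
    have h2 : g ((g Y)ᵀ * (g Y)ᵀ) = (g Y)ᵀ := hgYt
    rw [h1] at h2
    exact h2.symm
  have hgYpd : (g Y).PosDef := posDef_of_mem_U hgYU hgYsymm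
  have hYpd : Y.PosDef := posDef_of_mem_U hYU hYsymm
  exact (sq_unique hYpd.posSemidef hgYpd.posSemidef hY2).symm

lemma key {A : Mat} (hA : A.PosDef) :
    ∃ g : Mat → Mat,
      ContinuousAt g A ∧
      HasStrictFDerivAt g (Ring.inverse (LX (sq A))) A ∧
      sq A = g A ∧
      (∀ᶠ Y in nhdsWithin A {S : Mat | S.IsSymm}, sq Y = g Y) := by
  have hXpd : (sq A).PosDef := sq_posDef hA
  obtain ⟨e, he⟩ := exists_sylvEquiv hXpd
  have hf : HasStrictFDerivAt (fun Y : Mat => Y * Y) ((e : Mat →L[ℝ] Mat)) (sq A) := by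
    rw [he]; exact hasStrict_mulself (sq A)
  have hfX₀ : sq A * sq A = A := sq_mul_self hA
  obtain ⟨g, hgdef⟩ : ∃ g : Mat → Mat, g = hf.localInverse (fun Y : Mat => Y * Y) e (sq A) :=
    ⟨_, rfl⟩
  have hgA : g A = sq A := by
    have h := hf.localInverse_apply_image
    rw [← hgdef] at h
    simpa [hfX₀] using h
  have hgc : ContinuousAt g A := by
    have h := hf.localInverse_continuousAt
    rw [← hgdef] at h
    simp only [hfX₀] at h
    exact h
  have hgd : HasStrictFDerivAt g (Ring.inverse (LX (sq A))) A := by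
    rw [ring_inverse_LX hXpd he]
    have h := hf.to_localInverse
    rw [← hgdef] at h
    simp only [hfX₀] at h
    exact h
  have hleft : ∀ᶠ X in nhds (sq A), g (X * X) = X := by
    have h := hf.eventually_left_inverse
    rw [← hgdef] at h
    exact h
  have hright : ∀ᶠ Y in nhds A, g Y * g Y = Y := by
    have h := hf.eventually_right_inverse
    rw [← hgdef] at h
    simp only [hfX₀] at h
    exact h
  exact ⟨g, hgc, hgd, hgA.symm, key_ev hA g hgc hgA hleft hright⟩

end MatrixSqrtAux

open Matrix MatrixSqrtAux in
/-- On the (relatively) open set of symmetric positive definite matrices inside the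
space of symmetric matrices, the matrix square root `A ↦ √A` is continuously
differentiable, and its derivative at `A` in a symmetric direction `B` is the unique
symmetric matrix `D` solving the Sylvester equation `D√A + √A D = B`. -/
theorem matrix_sqrt_continuously_differentiable (N : ℕ) :
    ∃ (sq : Matrix (Fin N) (Fin N) ℝ → Matrix (Fin N) (Fin N) ℝ)
      (Dsq : Matrix (Fin N) (Fin N) ℝ →
        (Matrix (Fin N) (Fin N) ℝ →L[ℝ] Matrix (Fin N) (Fin N) ℝ)),
      -- `sq A` is the symmetric positive definite square root of `A`
      (∀ A ∈ SPD N, (sq A).PosDef ∧ (sq A).IsSymm ∧ sq A * sq A = A) ∧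
      -- the set `SPD N` is relatively open in the subspace of symmetric matrices
      (∀ A ∈ SPD N, SPD N ∈ nhdsWithin A {S : Matrix (Fin N) (Fin N) ℝ | S.IsSymm}) ∧
      -- `sq` is differentiable (within the symmetric matrices) with derivative `Dsq`
      (∀ A ∈ SPD N,
        HasFDerivWithinAt sq (Dsq A) {S : Matrix (Fin N) (Fin N) ℝ | S.IsSymm} A) ∧
      -- the derivative depends continuously on the base point
      ContinuousOn Dsq (SPD N) ∧
      -- Sylvester equation characterization of the derivative in symmetric directions
      (∀ A ∈ SPD N, ∀ B : Matrix (Fin N) (Fin N) ℝ, B.IsSymm →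
        (Dsq A B).IsSymm ∧ Dsq A B * sq A + sq A * Dsq A B = B ∧
        ∀ D : Matrix (Fin N) (Fin N) ℝ, D.IsSymm →
          D * sq A + sq A * D = B → D = Dsq A B) := by
  refine ⟨MatrixSqrtAux.sq,
    fun A => Ring.inverse (MatrixSqrtAux.LX (MatrixSqrtAux.sq A)), ?_, ?_, ?_, ?_, ?_⟩
  · intro A hA
    exact ⟨sq_posDef hA.1, sq_isSymm hA.1, sq_mul_self hA.1⟩
  · intro A hA
    rw [mem_nhdsWithin]
    exact ⟨U N, isOpen_U, posDef_mem_U hA.1,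
      fun Y hY => ⟨posDef_of_mem_U hY.1 hY.2, hY.2⟩⟩
  · intro A hA
    obtain ⟨g, hgc, hgd, hgA, hev⟩ := key hA.1
    exact (hgd.hasFDerivAt.hasFDerivWithinAt).congr_of_eventuallyEq hev hgA
  · intro A hA
    obtain ⟨g, hgc, hgd, hgA, hev⟩ := key hA.1
    have hev' : MatrixSqrtAux.sq =ᶠ[nhdsWithin A (SPD N)] g :=
      hev.filter_mono (nhdsWithin_mono A SPD_subset_symm)
    have hsq : ContinuousWithinAt MatrixSqrtAux.sq (SPD N) A :=
      (hgc.continuousWithinAt).congr_of_eventuallyEq hev' hgA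
    have h1 : ContinuousWithinAt
        (fun A => MatrixSqrtAux.LX (MatrixSqrtAux.sq A)) (SPD N) A :=
      (MatrixSqrtAux.LXc.continuous.continuousAt).comp_continuousWithinAt hsq
    obtain ⟨u, hu⟩ := isUnit_LX (sq_posDef hA.1)
    have h2 : ContinuousAt Ring.inverse (MatrixSqrtAux.LX (MatrixSqrtAux.sq A)) := by
      rw [← hu]
      exact @NormedRing.inverse_continuousAt _
        (@ContinuousLinearMap.toNormedRing ℝ (Matrix (Fin N) (Fin N) ℝ) _ _ _) _ u
    show ContinuousWithinAt
      (Ring.inverse ∘ fun A => MatrixSqrtAux.LX (MatrixSqrtAux.sq A)) (SPD N) A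
    exact ContinuousAt.comp_continuousWithinAt
      (f := fun A => MatrixSqrtAux.LX (MatrixSqrtAux.sq A)) h2 h1
  · intro A hA B hB
    have hXpd := sq_posDef hA.1
    have hXs : (MatrixSqrtAux.sq A)ᵀ = MatrixSqrtAux.sq A := sq_isSymm hA.1
    have hu := isUnit_LX hXpd
    have heq : MatrixSqrtAux.LX (MatrixSqrtAux.sq A)
        (Ring.inverse (MatrixSqrtAux.LX (MatrixSqrtAux.sq A)) B) = B := by
      have h := Ring.mul_inverse_cancel _ hu
      calc MatrixSqrtAux.LX (MatrixSqrtAux.sq A)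
            (Ring.inverse (MatrixSqrtAux.LX (MatrixSqrtAux.sq A)) B)
          = ((MatrixSqrtAux.LX (MatrixSqrtAux.sq A)) *
              Ring.inverse (MatrixSqrtAux.LX (MatrixSqrtAux.sq A))) B := by
            rw [ContinuousLinearMap.mul_apply]
        _ = B := by rw [h, ContinuousLinearMap.one_apply]
    have heq' : Ring.inverse (MatrixSqrtAux.LX (MatrixSqrtAux.sq A)) B * MatrixSqrtAux.sq A +
        MatrixSqrtAux.sq A * Ring.inverse (MatrixSqrtAux.LX (MatrixSqrtAux.sq A)) B = B := by
      rw [← LX_apply]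
      exact heq
    refine ⟨?_, heq', ?_⟩
    · have hBt : Bᵀ = B := hB
      have h1 : MatrixSqrtAux.LX (MatrixSqrtAux.sq A)
          (Ring.inverse (MatrixSqrtAux.LX (MatrixSqrtAux.sq A)) B)ᵀ = B := by
        rw [LX_apply]
        calc (Ring.inverse (MatrixSqrtAux.LX (MatrixSqrtAux.sq A)) B)ᵀ * MatrixSqrtAux.sq A +
              MatrixSqrtAux.sq A * (Ring.inverse (MatrixSqrtAux.LX (MatrixSqrtAux.sq A)) B)ᵀ
            = (Ring.inverse (MatrixSqrtAux.LX (MatrixSqrtAux.sq A)) B * MatrixSqrtAux.sq A +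
                MatrixSqrtAux.sq A * Ring.inverse (MatrixSqrtAux.LX (MatrixSqrtAux.sq A)) B)ᵀ := by
              rw [Matrix.transpose_add, Matrix.transpose_mul, Matrix.transpose_mul, hXs]
              exact add_comm _ _
          _ = Bᵀ := by rw [heq']
          _ = B := hBt
      exact LX_injective hXpd (h1.trans heq.symm)
    · intro D hDs hDeq
      apply LX_injective hXpd
      rw [LX_apply, LX_apply, hDeq, heq']

end
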